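/- Fix an odd positive integer ℓ. There exists μ₀ > 0 such that for every integer μ > μ₀, the determinant of the (ℓ+1) × (ℓ+1) matrix A⁺(μ), whose (i,j)-entry is m_{i+j-1}(μ), satisfies |det(A⁺(μ))| ≥ 1. -/

import Mathlib

open MeasureTheory ProbabilityTheory Matrix
open scoped NNReal ENNReal

/-- The k-th raw moment of the Gaussian N(μ,1). -/
noncomputable def gaussMoment (μ : ℝ) (k : ℕ) : ℝ :=
  ∫ x, x ^ k ∂(gaussianReal μ 1)

/-- The (ℓ+1) × (ℓ+1) Hankel matrix whose (i,j)-entry (1 ≤ i,j ≤ ℓ+1) is m_{i+j-1}(μ). -/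
noncomputable def Aplus (ℓ : ℕ) (μ : ℝ) : Matrix (Fin (ℓ + 1)) (Fin (ℓ + 1)) ℝ :=
  Matrix.of fun i j => gaussMoment μ (i.val + j.val + 1)

namespace Stmt3Aux

lemma integrable_pow (n : ℕ) : Integrable (fun x : ℝ => x ^ n) (gaussianReal 0 1) := by
  rw [gaussianReal_of_var_ne_zero _ one_ne_zero,
    integrable_withDensity_iff (measurable_gaussianPDF 0 1)
      (Filter.Eventually.of_forall fun x => ENNReal.ofReal_lt_top)]
  have key : Integrable (fun x : ℝ => x ^ n * Real.exp (-(2⁻¹) * x ^ 2)) := by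
    have hn : (-1 : ℝ) < (n : ℝ) := lt_of_lt_of_le (by norm_num) (Nat.cast_nonneg n)
    simpa [Real.rpow_natCast] using
      integrable_rpow_mul_exp_neg_mul_sq (by norm_num : (0:ℝ) < 2⁻¹) hn
  have heq : (fun x : ℝ => x ^ n * (gaussianPDF 0 1 x).toReal)
      = fun x => (Real.sqrt (2 * Real.pi * ((1:ℝ≥0):ℝ)))⁻¹
          * (x ^ n * Real.exp (-(2⁻¹) * x ^ 2)) := by
    funext x
    rw [gaussianPDF, ENNReal.toReal_ofReal (gaussianPDFReal_nonneg _ _ _), gaussianPDFReal]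
    have h2 : -(x - 0) ^ 2 / (2 * ((1:ℝ≥0):ℝ)) = -(2⁻¹) * x ^ 2 := by push_cast; ring
    rw [h2]; ring
  rw [heq]
  exact key.const_mul _

lemma gaussMoment_eq (μ : ℝ) (k : ℕ) :
    gaussMoment μ k = ∫ x, (x + μ) ^ k ∂(gaussianReal 0 1) := by
  have hmap : gaussianReal μ 1 = (gaussianReal 0 1).map (· + μ) := by
    rw [gaussianReal_map_add_const, zero_add]
  rw [gaussMoment, hmap, integral_map (by fun_prop) (by fun_prop)]

variable (ℓ : ℕ)

noncomputable def Hm : Matrix (Fin (ℓ+1)) (Fin (ℓ+1)) ℝ :=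
  Matrix.of fun a b => ∫ x, x ^ (a.1 + b.1) ∂(gaussianReal 0 1)

noncomputable def Gm : Matrix (Fin (ℓ+1)) (Fin (ℓ+1)) ℝ :=
  Matrix.of fun a b => ∫ x, x ^ (a.1 + b.1 + 1) ∂(gaussianReal 0 1)

noncomputable def Cm (μ : ℝ) : Matrix (Fin (ℓ+1)) (Fin (ℓ+1)) ℝ :=
  Matrix.of fun i a => (i.1.choose a.1 : ℝ) * μ ^ (i.1 - a.1)

lemma Cm_sum (μ x : ℝ) (i : Fin (ℓ+1)) :
    ∑ a : Fin (ℓ+1), Cm ℓ μ i a * x ^ a.1 = (x + μ) ^ i.1 := by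
  have h1 : ∑ a : Fin (ℓ+1), Cm ℓ μ i a * x ^ a.1
      = ∑ a ∈ Finset.range (ℓ+1), (i.1.choose a : ℝ) * μ ^ (i.1 - a) * x ^ a :=
    Fin.sum_univ_eq_sum_range (fun a => (i.1.choose a : ℝ) * μ ^ (i.1 - a) * x ^ a) (ℓ+1)
  rw [h1, add_pow]
  rw [← Finset.sum_subset (Finset.range_subset_range.mpr i.isLt)
    (fun a _ ha => by
      have : i.1 < a := by
        simpa using Nat.lt_of_succ_le (Nat.not_lt.mp (fun h => ha (Finset.mem_range.mpr h)))
      simp [Nat.choose_eq_zero_of_lt this])]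
  exact Finset.sum_congr rfl fun a _ => by ring

lemma aplus_eq (μ : ℝ) :
    Aplus ℓ μ = Cm ℓ μ * ((Gm ℓ + μ • Hm ℓ) * (Cm ℓ μ)ᵀ) := by
  ext i j
  have hInt : ∀ a b : ℕ,
      Integrable (fun x : ℝ => x ^ (a + b + 1) + μ * x ^ (a + b)) (gaussianReal 0 1) :=
    fun a b => (integrable_pow _).add ((integrable_pow _).const_mul μ)
  have hX : ∀ a b : Fin (ℓ+1), (Gm ℓ + μ • Hm ℓ) a b
      = ∫ x, (x ^ (a.1 + b.1 + 1) + μ * x ^ (a.1 + b.1)) ∂(gaussianReal 0 1) := by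
    intro a b
    rw [integral_add (integrable_pow _) ((integrable_pow _).const_mul μ),
      integral_const_mul]
    simp [Gm, Hm, Matrix.add_apply, Matrix.smul_apply, smul_eq_mul]
  have hpt : ∀ x : ℝ, (x + μ) ^ (i.1 + j.1 + 1)
      = ∑ a : Fin (ℓ+1), ∑ b : Fin (ℓ+1),
          Cm ℓ μ i a * ((x ^ (a.1 + b.1 + 1) + μ * x ^ (a.1 + b.1)) * Cm ℓ μ j b) := by
    intro x
    rw [pow_succ, pow_add, ← Cm_sum ℓ μ x i, ← Cm_sum ℓ μ x j]
    rw [Finset.sum_mul, Finset.sum_mul]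
    refine Finset.sum_congr rfl fun a _ => ?_
    simp only [Finset.mul_sum, Finset.sum_mul]
    refine Finset.sum_congr rfl fun b _ => ?_
    have e1 : x ^ (a.1 + b.1 + 1) = x ^ a.1 * x ^ b.1 * x := by
      rw [pow_succ, pow_add]
    have e2 : x ^ (a.1 + b.1) = x ^ a.1 * x ^ b.1 := pow_add x _ _
    rw [e1, e2]; ring
  have lhs : Aplus ℓ μ i j = ∫ x, (x + μ) ^ (i.1 + j.1 + 1) ∂(gaussianReal 0 1) := by
    simp [Aplus, gaussMoment_eq]
  rw [lhs]
  simp only [Matrix.mul_apply, Matrix.transpose_apply, hX]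
  calc ∫ x, (x + μ) ^ (i.1 + j.1 + 1) ∂(gaussianReal 0 1)
      = ∫ x, ∑ a : Fin (ℓ+1), ∑ b : Fin (ℓ+1),
          Cm ℓ μ i a * ((x ^ (a.1 + b.1 + 1) + μ * x ^ (a.1 + b.1)) * Cm ℓ μ j b)
          ∂(gaussianReal 0 1) := by
        refine integral_congr_ae (Filter.Eventually.of_forall fun x => hpt x)
    _ = ∑ a : Fin (ℓ+1), ∑ b : Fin (ℓ+1), ∫ x,
          Cm ℓ μ i a * ((x ^ (a.1 + b.1 + 1) + μ * x ^ (a.1 + b.1)) * Cm ℓ μ j b)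
          ∂(gaussianReal 0 1) := by
        rw [integral_finset_sum _ (fun a _ => integrable_finset_sum _
          (fun b _ => (((hInt a.1 b.1).mul_const _).const_mul _)))]
        exact Finset.sum_congr rfl fun a _ => integral_finset_sum _
          (fun b _ => (((hInt a.1 b.1).mul_const _).const_mul _))
    _ = ∑ a : Fin (ℓ+1), Cm ℓ μ i a * ∑ b : Fin (ℓ+1),
          (∫ x, (x ^ (a.1 + b.1 + 1) + μ * x ^ (a.1 + b.1)) ∂(gaussianReal 0 1))
            * Cm ℓ μ j b := by
        refine Finset.sum_congr rfl fun a _ => ?_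
        rw [Finset.mul_sum]
        refine Finset.sum_congr rfl fun b _ => ?_
        rw [integral_const_mul, integral_mul_const]

lemma det_Cm (μ : ℝ) : (Cm ℓ μ).det = 1 := by
  rw [Matrix.det_of_lowerTriangular (Cm ℓ μ)
    (fun i j hij => by
      have : i.1 < j.1 := hij
      simp [Cm, Nat.choose_eq_zero_of_lt this])]
  simp [Cm]

lemma hm_posdef : (Hm ℓ).PosDef := by
  rw [Matrix.posDef_iff_dotProduct_mulVec]
  constructor
  · ext a b
    simp [Hm, Matrix.conjTranspose_apply, Nat.add_comm a.1 b.1]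
  · intro v hv
    have hquad : dotProduct (star v) (Hm ℓ *ᵥ v)
        = ∫ x, (∑ a : Fin (ℓ+1), v a * x ^ a.1) ^ 2 ∂(gaussianReal 0 1) := by
      have hpt : ∀ x : ℝ, (∑ a : Fin (ℓ+1), v a * x ^ a.1) ^ 2
          = ∑ a : Fin (ℓ+1), ∑ b : Fin (ℓ+1), v a * (x ^ (a.1 + b.1) * v b) := by
        intro x
        rw [sq, Finset.sum_mul]
        refine Finset.sum_congr rfl fun a _ => ?_
        simp only [Finset.mul_sum, Finset.sum_mul]
        refine Finset.sum_congr rfl fun b _ => ?_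
        rw [pow_add]; ring
      have h2 : ∫ x, (∑ a : Fin (ℓ+1), v a * x ^ a.1) ^ 2 ∂(gaussianReal 0 1)
          = ∑ a : Fin (ℓ+1), ∑ b : Fin (ℓ+1), v a *
              ((∫ x, x ^ (a.1 + b.1) ∂(gaussianReal 0 1)) * v b) := by
        calc ∫ x, (∑ a : Fin (ℓ+1), v a * x ^ a.1) ^ 2 ∂(gaussianReal 0 1)
            = ∫ x, ∑ a : Fin (ℓ+1), ∑ b : Fin (ℓ+1), v a * (x ^ (a.1 + b.1) * v b)
              ∂(gaussianReal 0 1) :=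
              integral_congr_ae (Filter.Eventually.of_forall fun x => hpt x)
          _ = ∑ a : Fin (ℓ+1), ∑ b : Fin (ℓ+1),
              ∫ x, v a * (x ^ (a.1 + b.1) * v b) ∂(gaussianReal 0 1) := by
              rw [integral_finset_sum _ (fun a _ => integrable_finset_sum _
                (fun b _ => ((integrable_pow _).mul_const _).const_mul _))]
              exact Finset.sum_congr rfl fun a _ => integral_finset_sum _
                (fun b _ => ((integrable_pow _).mul_const _).const_mul _)
          _ = ∑ a : Fin (ℓ+1), ∑ b : Fin (ℓ+1), v a *
              ((∫ x, x ^ (a.1 + b.1) ∂(gaussianReal 0 1)) * v b) := by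
              refine Finset.sum_congr rfl fun a _ => Finset.sum_congr rfl fun b _ => ?_
              rw [integral_const_mul, integral_mul_const]
      rw [h2]
      simp [dotProduct, Matrix.mulVec, Hm, Finset.mul_sum]
    rw [hquad]
    -- the polynomial
    set p : Polynomial ℝ := ∑ a : Fin (ℓ+1), Polynomial.C (v a) * Polynomial.X ^ a.1 with hp_def
    have hev : ∀ x : ℝ, p.eval x = ∑ a : Fin (ℓ+1), v a * x ^ a.1 := by
      intro x
      simp [hp_def, Polynomial.eval_finset_sum]
    have hpne : p ≠ 0 := by
      obtain ⟨a, ha⟩ := Function.ne_iff.mp hv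
      intro h0
      apply ha
      have hc : p.coeff a.1 = v a := by
        rw [hp_def, Polynomial.finset_sum_coeff]
        simp only [Polynomial.coeff_C_mul, Polynomial.coeff_X_pow]
        rw [Finset.sum_eq_single a
          (fun b _ hb => by
            rw [if_neg (fun h => hb (Fin.val_injective h).symm), mul_zero])
          (fun h => absurd (Finset.mem_univ a) h)]
        simp
      rw [h0] at hc
      simpa using hc.symm
    have hint : Integrable (fun x : ℝ => (∑ a : Fin (ℓ+1), v a * x ^ a.1) ^ 2)
        (gaussianReal 0 1) := by
      have : (fun x : ℝ => (∑ a : Fin (ℓ+1), v a * x ^ a.1) ^ 2)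
          = fun x => ∑ a : Fin (ℓ+1), ∑ b : Fin (ℓ+1), v a * (x ^ (a.1 + b.1) * v b) := by
        funext x
        rw [sq, Finset.sum_mul]
        refine Finset.sum_congr rfl fun a _ => ?_
        simp only [Finset.mul_sum, Finset.sum_mul]
        refine Finset.sum_congr rfl fun b _ => ?_
        rw [pow_add]; ring
      rw [this]
      exact integrable_finset_sum _ (fun a _ => integrable_finset_sum _
        (fun b _ => ((integrable_pow _).mul_const _).const_mul _))
    rw [integral_pos_iff_support_of_nonneg (fun x => sq_nonneg _) hint]
    -- positive measure of support
    have hroots : {x : ℝ | p.IsRoot x}.Finite := Polynomial.finite_setOf_isRoot hpne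
    have hz : gaussianReal 0 1 {x : ℝ | p.IsRoot x} = 0 :=
      gaussianReal_absolutelyContinuous 0 one_ne_zero (hroots.measure_zero volume)
    by_contra h0
    have hsupp0 : gaussianReal 0 1
        (Function.support fun x => (∑ a : Fin (ℓ+1), v a * x ^ a.1) ^ 2) = 0 :=
      le_antisymm (not_lt.mp h0) zero_le
    have hcover : (Set.univ : Set ℝ) ⊆
        (Function.support fun x => (∑ a : Fin (ℓ+1), v a * x ^ a.1) ^ 2)
          ∪ {x : ℝ | p.IsRoot x} := by
      intro x _
      by_cases hx : p.eval x = 0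
      · exact Or.inr hx
      · left
        simp only [Function.mem_support]
        rw [← hev]
        exact pow_ne_zero _ hx
    have : (1 : ℝ≥0∞) ≤ 0 := by
      calc (1 : ℝ≥0∞) = gaussianReal 0 1 Set.univ := (measure_univ).symm
        _ ≤ gaussianReal 0 1 ((Function.support fun x =>
              (∑ a : Fin (ℓ+1), v a * x ^ a.1) ^ 2) ∪ {x : ℝ | p.IsRoot x}) :=
            measure_mono hcover
        _ ≤ _ + _ := measure_union_le _ _
        _ = 0 := by rw [hsupp0, hz, add_zero]
    simp at this

lemma eval_char (M : Matrix (Fin (ℓ+1)) (Fin (ℓ+1)) ℝ) (μ : ℝ) :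
    (Matrix.charpoly (-M)).eval μ = (M + μ • 1).det := by
  rw [Matrix.charpoly]
  rw [show (Matrix.charmatrix (-M)).det.eval μ
      = ((Polynomial.evalRingHom μ).mapMatrix (Matrix.charmatrix (-M))).det from
    RingHom.map_det (Polynomial.evalRingHom μ) _]
  congr 1
  ext i j
  by_cases hij : i = j
  · subst hij
    simp [Matrix.charmatrix_apply_eq, Matrix.one_apply, Matrix.smul_apply]
    ring
  · simp [Matrix.charmatrix_apply_ne _ _ _ hij, Matrix.one_apply_ne hij,
      Matrix.smul_apply]

end Stmt3Aux

open Stmt3Aux in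
/-- For odd positive ℓ, there is μ₀ > 0 such that |det A⁺(μ)| ≥ 1 for every integer μ > μ₀. -/
theorem stmt3 (ℓ : ℕ) (hpos : 0 < ℓ) (hodd : Odd ℓ) :
    ∃ μ₀ : ℝ, 0 < μ₀ ∧ ∀ μ : ℤ, μ₀ < (μ : ℝ) → 1 ≤ |(Aplus ℓ (μ : ℝ)).det| := by
  classical
  have hdet : 0 < (Hm ℓ).det := (hm_posdef ℓ).det_pos
  have hHu : IsUnit (Hm ℓ).det := hdet.ne'.isUnit
  set M : Matrix (Fin (ℓ+1)) (Fin (ℓ+1)) ℝ := (Hm ℓ)⁻¹ * Gm ℓ with hM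
  set p : Polynomial ℝ := Matrix.charpoly (-M) with hp
  have hfact : ∀ μ : ℝ, (Gm ℓ + μ • Hm ℓ).det = (Hm ℓ).det * p.eval μ := by
    intro μ
    have h1 : Gm ℓ + μ • Hm ℓ = Hm ℓ * (M + μ • 1) := by
      rw [Matrix.mul_add, hM, ← Matrix.mul_assoc, Matrix.mul_nonsing_inv _ hHu,
        Matrix.one_mul]
      congr 1
      rw [Matrix.mul_smul, Matrix.mul_one]
    rw [h1, Matrix.det_mul, eval_char]
  have hA : ∀ μ : ℝ, (Aplus ℓ μ).det = (Hm ℓ).det * p.eval μ := by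
    intro μ
    rw [aplus_eq]
    simp only [Matrix.det_mul, Matrix.det_transpose, det_Cm, one_mul, mul_one]
    exact hfact μ
  set q : Polynomial ℝ := Polynomial.C (Hm ℓ).det * p with hq
  have hmono : p.Monic := Matrix.charpoly_monic _
  have hqev : ∀ μ : ℝ, q.eval μ = (Aplus ℓ μ).det := by
    intro μ; rw [hA μ]; simp [hq]
  have hdeg : 0 < q.degree := by
    rw [hq, Polynomial.degree_C_mul hdet.ne', hp, Matrix.charpoly_degree_eq_dim]
    simp only [Fintype.card_fin]
    exact_mod_cast ℓ.succ_pos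
  have hlc : 0 ≤ q.leadingCoeff := by
    rw [hq, Polynomial.leadingCoeff_mul, Polynomial.leadingCoeff_C, hmono.leadingCoeff,
      mul_one]
    exact hdet.le
  have htend := Polynomial.tendsto_atTop_of_leadingCoeff_nonneg q hdeg hlc
  obtain ⟨N, hN⟩ := Filter.eventually_atTop.mp (htend.eventually_ge_atTop 1)
  refine ⟨max N 1, lt_of_lt_of_le zero_lt_one (le_max_right N 1), fun μ hμ => ?_⟩
  have h1 : 1 ≤ q.eval (μ : ℝ) :=
    hN _ (le_of_lt (lt_of_le_of_lt (le_max_left N 1) hμ))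
  rw [hqev] at h1
  exact h1.trans (le_abs_self _)
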